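/- arXiv:2405.07968 — 2 statements merged into one kernel-verified Lean document; each statement's English description precedes it below -/
import Mathlib

section
/- Let E11, A11 ∈ ℝ^{m1×n1}, E12, A12 ∈ ℝ^{m1×m2}, A22 ∈ ℝ^{m2×m2}, C11 ∈ ℝ^{p×n1}, C12 ∈ ℝ^{p×m2}, K11 ∈ ℝ^{r×n1}, K12 ∈ ℝ^{r×m2}. Set E = [E11 E12; 0 I_{m2}], A = [A11 A12; 0 A22] (both of size (m1+m2)×(n1+m2)), C = [C11 C12], K = [K11 K12], Ē = [E; 0], Ā = [A; C] (of size (m1+m2+p)×(n1+m2)), Ē11 = [E11; 0], Ā11 = [A11; C11] (of size (m1+p)×n1). Then for every k ≥ 1, rank F_{k,[Ē,Ā]} = k·m2 + rank F_{k,[Ē11,Ā11]}, and for every k ≥ 2, rank F_{k,[Ē,Ā,K]} = k·m2 + rank F_{k,[Ē11,Ā11,K11]}. -/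
open Matrix

/-- The block matrix `F_{k,[E,A]}`: viewed as a `k × k` array of `m × n` blocks,
diagonal blocks equal `E`, superdiagonal blocks equal `A`, all other blocks zero. -/
noncomputable def Fmat (k : ℕ) {R C : Type*} [Fintype R] [Fintype C]
    (E A : Matrix R C ℝ) : Matrix (Fin k × R) (Fin k × C) ℝ :=
  Matrix.of fun p q =>
    if q.1.val = p.1.val then E p.2 q.2
    else if q.1.val = p.1.val + 1 then A p.2 q.2
    else 0

/-- The matrix `F_{k,[E,A,K]}`: `F_{k,[E,A]}` with an extra block row appended at the
bottom, having `K` in the second block column and zeros elsewhere. -/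
noncomputable def FmatK (k : ℕ) {R C : Type*} [Fintype R] [Fintype C] {r : ℕ}
    (E A : Matrix R C ℝ) (K : Matrix (Fin r) C ℝ) :
    Matrix ((Fin k × R) ⊕ Fin r) (Fin k × C) ℝ :=
  Matrix.of fun p q =>
    match p with
    | Sum.inl pr => Fmat k E A pr q
    | Sum.inr i => if q.1.val = 1 then K i q.2 else 0

/-- The generalized Wong sequence `W^i_{[E,A,B,C]}`:
`W⁰ = {0}`, `W^{i+1} = E⁻¹(A·W^i + im B) ∩ ker C`. -/
noncomputable def WongW {R : Type*} [Fintype R] {n l p : ℕ}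
    (E A : Matrix R (Fin n) ℝ) (B : Matrix R (Fin l) ℝ) (C : Matrix (Fin p) (Fin n) ℝ) :
    ℕ → Submodule ℝ (Fin n → ℝ)
  | 0 => ⊥
  | i + 1 =>
      (Submodule.comap E.mulVecLin
        (Submodule.map A.mulVecLin (WongW E A B C i) ⊔ LinearMap.range B.mulVecLin)) ⊓
        LinearMap.ker C.mulVecLin

/-- The generalized Wong sequence `V^i_{[E,A,B,C]}`:
`V⁰ = ker C`, `V^{i+1} = A⁻¹(E·V^i + im B) ∩ ker C`. -/
noncomputable def WongV {R : Type*} [Fintype R] {n l p : ℕ}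
    (E A : Matrix R (Fin n) ℝ) (B : Matrix R (Fin l) ℝ) (C : Matrix (Fin p) (Fin n) ℝ) :
    ℕ → Submodule ℝ (Fin n → ℝ)
  | 0 => LinearMap.ker C.mulVecLin
  | i + 1 =>
      (Submodule.comap A.mulVecLin
        (Submodule.map E.mulVecLin (WongV E A B C i) ⊔ LinearMap.range B.mulVecLin)) ⊓
        LinearMap.ker C.mulVecLin

section Generic
variable {α β α' β' : Type*} [Fintype α] [Fintype β] [Fintype α'] [Fintype β']
  [DecidableEq α] [DecidableEq β] [DecidableEq α'] [DecidableEq β']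

lemma rank_submatrix_equiv (A : Matrix α β ℝ) (e₁ : α' ≃ α) (e₂ : β' ≃ β) :
    (A.submatrix e₁ e₂).rank = A.rank := by
  rw [Matrix.rank, Matrix.rank, mulVecLin_submatrix, LinearMap.range_comp, LinearMap.range_comp,
    show LinearMap.funLeft ℝ ℝ e₂.symm = LinearEquiv.funCongrLeft ℝ ℝ e₂.symm from rfl,
    LinearEquiv.range, Submodule.map_top,
    show LinearMap.funLeft ℝ ℝ e₁ = LinearEquiv.funCongrLeft ℝ ℝ e₁ from rfl]
  exact LinearEquiv.finrank_map_eq _ _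

lemma range_prodMap' {M M₂ M₃ M₄ : Type*} [AddCommGroup M] [AddCommGroup M₂] [AddCommGroup M₃]
    [AddCommGroup M₄] [Module ℝ M] [Module ℝ M₂] [Module ℝ M₃] [Module ℝ M₄]
    (f : M →ₗ[ℝ] M₂) (g : M₃ →ₗ[ℝ] M₄) :
    LinearMap.range (f.prodMap g) = (LinearMap.range f).prod (LinearMap.range g) := by
  ext ⟨a, b⟩
  simp only [LinearMap.mem_range, Submodule.mem_prod]
  constructor
  · rintro ⟨⟨v, w⟩, h⟩
    exact ⟨⟨v, congrArg Prod.fst h⟩, ⟨w, congrArg Prod.snd h⟩⟩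
  · rintro ⟨⟨v, hv⟩, ⟨w, hw⟩⟩
    exact ⟨(v, w), by simp [hv, hw]⟩

set_option maxHeartbeats 1000000 in
lemma finrank_prod_submodule {M M₂ : Type*} [AddCommGroup M] [AddCommGroup M₂]
    [Module ℝ M] [Module ℝ M₂] [FiniteDimensional ℝ M] [FiniteDimensional ℝ M₂]
    (S : Submodule ℝ M) (T : Submodule ℝ M₂) :
    Module.finrank ℝ (S.prod T) = Module.finrank ℝ S + Module.finrank ℝ T := by
  rw [LinearMap.prod_eq_sup_map]
  have hinf : (S.map (LinearMap.inl ℝ M M₂)) ⊓ (T.map (LinearMap.inr ℝ M M₂)) = ⊥ := by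
    rw [Submodule.eq_bot_iff]
    intro x hx
    rw [Submodule.mem_inf, Submodule.mem_map, Submodule.mem_map] at hx
    obtain ⟨⟨u, -, hu⟩, ⟨w, -, hw⟩⟩ := hx
    rw [Prod.ext_iff]
    exact ⟨(congrArg Prod.fst hw).symm, (congrArg Prod.snd hu).symm⟩
  have h := Submodule.finrank_sup_add_finrank_inf_eq (S.map (LinearMap.inl ℝ M M₂))
    (T.map (LinearMap.inr ℝ M M₂))
  rw [hinf, finrank_bot ℝ (M × M₂), add_zero] at h
  rw [h, LinearEquiv.finrank_eq (Submodule.equivMapOfInjective (LinearMap.inl ℝ M M₂) LinearMap.inl_injective S).symm,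
    LinearEquiv.finrank_eq (Submodule.equivMapOfInjective (LinearMap.inr ℝ M M₂) LinearMap.inr_injective T).symm]

lemma rank_fromBlocks_diag (A : Matrix α β ℝ) (D : Matrix α' β' ℝ) :
    (fromBlocks A 0 0 D).rank = A.rank + D.rank := by
  have key : (fromBlocks A 0 0 D).mulVecLin =
      ((LinearEquiv.sumArrowLequivProdArrow α α' ℝ ℝ).symm.toLinearMap.comp
        (A.mulVecLin.prodMap D.mulVecLin)).comp
        (LinearEquiv.sumArrowLequivProdArrow β β' ℝ ℝ).toLinearMap := by
    apply LinearMap.ext; intro v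
    have hv : v = Sum.elim (v ∘ Sum.inl) (v ∘ Sum.inr) := (Sum.elim_comp_inl_inr v).symm
    simp only [Matrix.mulVecLin_apply, LinearMap.comp_apply, LinearEquiv.coe_coe,
      LinearMap.prodMap_apply]
    conv_lhs => rw [hv]
    rw [fromBlocks_mulVec]
    ext x
    cases x <;>
      simp [Matrix.zero_mulVec, LinearEquiv.sumArrowLequivProdArrow,
        Equiv.sumArrowEquivProdArrow, Matrix.mulVec, dotProduct]
  rw [Matrix.rank, key, LinearMap.range_comp, LinearEquiv.range, Submodule.map_top,
    LinearMap.range_comp, LinearEquiv.finrank_map_eq, range_prodMap', finrank_prod_submodule]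
  rfl

end Generic

section Core
variable {k n1 m2 : ℕ} (A22 : Matrix (Fin m2) (Fin m2) ℝ)

/-- Column operation matrix. -/
noncomputable def Qm (k n1 : ℕ) (A22 : Matrix (Fin m2) (Fin m2) ℝ) :
    Matrix (Fin k × (Fin n1 ⊕ Fin m2)) (Fin k × (Fin n1 ⊕ Fin m2)) ℝ :=
  Matrix.of fun pq qq =>
    match pq.2, qq.2 with
    | Sum.inl c, Sum.inl c' => if pq.1 = qq.1 ∧ c = c' then 1 else 0
    | Sum.inr s, Sum.inr t =>
        if pq.1.val ≤ qq.1.val then ((-A22) ^ (qq.1.val - pq.1.val)) s t else 0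
    | _, _ => 0

/-- Left inverse of `Qm`. -/
noncomputable def Rm (k n1 : ℕ) (A22 : Matrix (Fin m2) (Fin m2) ℝ) :
    Matrix (Fin k × (Fin n1 ⊕ Fin m2)) (Fin k × (Fin n1 ⊕ Fin m2)) ℝ :=
  Matrix.of fun pq qq =>
    match pq.2, qq.2 with
    | Sum.inl c, Sum.inl c' => if pq.1 = qq.1 ∧ c = c' then 1 else 0
    | Sum.inr s, Sum.inr t =>
        if qq.1.val = pq.1.val then (1 : Matrix (Fin m2) (Fin m2) ℝ) s t
        else if qq.1.val = pq.1.val + 1 then A22 s t else 0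
    | _, _ => 0

@[simp] lemma Qm_ll (i j : Fin k) (c c' : Fin n1) :
    Qm k n1 A22 (i, Sum.inl c) (j, Sum.inl c') = if i = j ∧ c = c' then 1 else 0 := rfl
@[simp] lemma Qm_lr (i j : Fin k) (c : Fin n1) (t : Fin m2) :
    Qm k n1 A22 (i, Sum.inl c) (j, Sum.inr t) = 0 := rfl
@[simp] lemma Qm_rl (i j : Fin k) (s : Fin m2) (c : Fin n1) :
    Qm k n1 A22 (i, Sum.inr s) (j, Sum.inl c) = 0 := rfl
@[simp] lemma Qm_rr (i j : Fin k) (s t : Fin m2) :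
    Qm k n1 A22 (i, Sum.inr s) (j, Sum.inr t) =
      if i.val ≤ j.val then ((-A22) ^ (j.val - i.val)) s t else 0 := rfl

@[simp] lemma Rm_ll (i j : Fin k) (c c' : Fin n1) :
    Rm k n1 A22 (i, Sum.inl c) (j, Sum.inl c') = if i = j ∧ c = c' then 1 else 0 := rfl
@[simp] lemma Rm_lr (i j : Fin k) (c : Fin n1) (t : Fin m2) :
    Rm k n1 A22 (i, Sum.inl c) (j, Sum.inr t) = 0 := rfl
@[simp] lemma Rm_rl (i j : Fin k) (s : Fin m2) (c : Fin n1) :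
    Rm k n1 A22 (i, Sum.inr s) (j, Sum.inl c) = 0 := rfl
@[simp] lemma Rm_rr (i j : Fin k) (s t : Fin m2) :
    Rm k n1 A22 (i, Sum.inr s) (j, Sum.inr t) =
      if j.val = i.val then (1 : Matrix (Fin m2) (Fin m2) ℝ) s t
      else if j.val = i.val + 1 then A22 s t else 0 := rfl

lemma sum_fin_val {k : ℕ} (v : ℕ) (g : Fin k → ℝ) :
    (∑ l : Fin k, if l.val = v then g l else 0) = if h : v < k then g ⟨v, h⟩ else 0 := by
  split_ifs with h
  · rw [Finset.sum_eq_single (⟨v, h⟩ : Fin k)]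
    · simp
    · intro b _ hb
      simp only [ite_eq_right_iff]
      intro hbv
      exact absurd (Fin.ext hbv) hb
    · simp
  · apply Finset.sum_eq_zero
    intro l _
    simp only [ite_eq_right_iff]
    intro hl
    exact absurd (hl ▸ l.isLt) h

lemma ite_nested_split {c1 c2 : Prop} [Decidable c1] [Decidable c2] (h : c1 → ¬ c2)
    (a b : ℝ) : (if c1 then a else if c2 then b else 0) =
      (if c1 then a else 0) + (if c2 then b else 0) := by
  by_cases h1 : c1
  · simp [h1, h h1]
  · simp [h1]

/-- The key computation: a "band row" `(δ at block i, A22 at block i+1)` times `Qm`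
gives a delta row. -/
lemma core_band (i : Fin k) (s : Fin m2) (v : Fin k × (Fin n1 ⊕ Fin m2) → ℝ)
    (hv1 : ∀ l c, v (l, Sum.inl c) = 0)
    (hv2 : ∀ l u, v (l, Sum.inr u) =
      if l.val = i.val then (1 : Matrix (Fin m2) (Fin m2) ℝ) s u
      else if l.val = i.val + 1 then A22 s u else 0)
    (q : Fin k × (Fin n1 ⊕ Fin m2)) :
    (∑ lq, v lq * Qm k n1 A22 lq q) = if q = (i, Sum.inr s) then 1 else 0 := by
  obtain ⟨j, y⟩ := q
  rw [Fintype.sum_prod_type]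
  cases y with
  | inl c =>
    have : ∀ l : Fin k, (∑ x : Fin n1 ⊕ Fin m2, v (l, x) * Qm k n1 A22 (l, x) (j, Sum.inl c)) = 0 := by
      intro l
      rw [Fintype.sum_sum_type]
      simp [hv1]
    rw [Finset.sum_congr rfl fun l _ => this l]
    simp [Prod.ext_iff]
  | inr t =>
    have inner : ∀ l : Fin k,
        (∑ x : Fin n1 ⊕ Fin m2, v (l, x) * Qm k n1 A22 (l, x) (j, Sum.inr t)) =
        (if l.val = i.val then
            (if l.val ≤ j.val then ((-A22) ^ (j.val - l.val)) s t else 0) else 0)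
        + (if l.val = i.val + 1 then
            (if l.val ≤ j.val then (A22 * (-A22) ^ (j.val - l.val)) s t else 0) else 0) := by
      intro l
      rw [Fintype.sum_sum_type]
      simp only [hv1, zero_mul, Finset.sum_const_zero, zero_add, hv2, Qm_rr]
      by_cases h1 : l.val = i.val
      · simp only [h1, if_true, if_neg (by omega : ¬ i.val = i.val + 1)]
        by_cases h2 : i.val ≤ j.val
        · simp only [h2, if_true, ← Matrix.mul_apply, one_mul, add_zero]
        · simp [h2]
      · simp only [h1, if_false]
        by_cases h1' : l.val = i.val + 1
        · simp only [h1', if_true, zero_add]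
          by_cases h2 : i.val + 1 ≤ j.val
          · simp only [h2, if_true, ← Matrix.mul_apply]
          · simp [h2]
        · simp [h1']
    rw [Finset.sum_congr rfl fun l _ => inner l, Finset.sum_add_distrib,
      sum_fin_val i.val _, sum_fin_val (i.val + 1) _]
    simp only [i.isLt, dif_pos]
    have hne : ∀ (hji : j.val ≠ i.val), ¬ ((j, (Sum.inr t : Fin n1 ⊕ Fin m2)) = (i, Sum.inr s)) := by
      intro hji h
      exact hji (congrArg (fun z => (Prod.fst z).val) h)
    rcases lt_trichotomy j.val i.val with hj | hj | hj
    · rw [if_neg (by omega), if_neg (hne (by omega))]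
      have h2 : ¬ (i.val + 1 ≤ j.val) := by omega
      simp [h2]
    · have hji : j = i := Fin.ext hj
      subst hji
      rw [if_pos (le_refl _), Nat.sub_self, pow_zero]
      have h2 : ¬ (j.val + 1 ≤ j.val) := by omega
      simp only [h2, if_false, dite_eq_ite, if_pos, ite_self, add_zero]
      simp [Matrix.one_apply, Prod.ext_iff, eq_comm]
    · have h1 : j.val - i.val = (j.val - (i.val + 1)) + 1 := by omega
      have hmat : (-A22) ^ (j.val - i.val) + A22 * (-A22) ^ (j.val - (i.val + 1)) = 0 := by
        rw [h1, pow_succ', ← add_mul, neg_add_cancel, zero_mul]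
      have h2 : i.val + 1 < k := by omega
      rw [if_pos (by omega), dif_pos h2, if_pos (by omega), if_neg (hne (by omega)),
                ← Matrix.add_apply, hmat, Matrix.zero_apply]

end Core

section RQ
variable {k n1 m2 : ℕ} (A22 : Matrix (Fin m2) (Fin m2) ℝ)

lemma ite_eq_comm {α : Type*} [DecidableEq α] (a b : α) (x y : ℝ) :
    (if a = b then x else y) = (if b = a then x else y) := if_congr eq_comm rfl rfl

lemma Rm_mul_Qm : Rm k n1 A22 * Qm k n1 A22 = 1 := by
  ext ⟨l, x⟩ ⟨j, y⟩
  rw [Matrix.mul_apply]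
  cases x with
  | inl c =>
    have hrow : ∀ lq, Rm k n1 A22 (l, Sum.inl c) lq = if lq = (l, Sum.inl c) then 1 else 0 := by
      rintro ⟨l', (c' | u)⟩
      · rw [Rm_ll]
        refine if_congr ?_ rfl rfl
        simp only [Prod.mk.injEq, Sum.inl.injEq]
        exact ⟨fun ⟨h1, h2⟩ => ⟨h1.symm, h2.symm⟩, fun ⟨h1, h2⟩ => ⟨h1.symm, h2.symm⟩⟩
      · rw [Rm_lr]
        symm
        rw [if_neg]
        simp
    rw [Finset.sum_congr rfl fun lq _ => by rw [hrow lq]]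
    simp only [ite_mul, one_mul, zero_mul, Finset.sum_ite_eq']
    simp only [Finset.mem_univ, if_true]
    cases y with
    | inl c' =>
      rw [Qm_ll, Matrix.one_apply]
      refine if_congr ?_ rfl rfl
      simp only [Prod.mk.injEq, Sum.inl.injEq]
    | inr t =>
      rw [Qm_lr, Matrix.one_apply, if_neg]
      simp
  | inr s =>
    rw [core_band A22 l s _ (fun l' c' => rfl) (fun l' u => rfl) (j, y), Matrix.one_apply]
    exact (ite_eq_comm _ _ _ _).symm

lemma isUnit_det_Qm : IsUnit (Qm k n1 A22).det := by
  have h := congrArg Matrix.det (Rm_mul_Qm (k := k) (n1 := n1) A22)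
  rw [Matrix.det_mul, Matrix.det_one] at h
  exact IsUnit.of_mul_eq_one _ (by rw [mul_comm]; exact h)

end RQ

section Nsec
variable {k m1 m2 p r n1 : ℕ}

/-- Indicator that a row is not one of the "identity rows". -/
def rowOK (k m1 m2 p r : ℕ) : (Fin k × ((Fin m1 ⊕ Fin m2) ⊕ Fin p)) ⊕ Fin r → ℝ :=
  fun pr => match pr with
  | Sum.inl (_, Sum.inl (Sum.inr _)) => 0
  | _ => 1

/-- The row-operation matrix clearing the `m2`-columns using the identity rows. -/
noncomputable def Nmat (k m1 m2 p r n1 : ℕ)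
    (W : Matrix ((Fin k × ((Fin m1 ⊕ Fin m2) ⊕ Fin p)) ⊕ Fin r) (Fin k × (Fin n1 ⊕ Fin m2)) ℝ) :
    Matrix ((Fin k × ((Fin m1 ⊕ Fin m2) ⊕ Fin p)) ⊕ Fin r)
      ((Fin k × ((Fin m1 ⊕ Fin m2) ⊕ Fin p)) ⊕ Fin r) ℝ :=
  Matrix.of fun pr qr =>
    rowOK k m1 m2 p r pr *
      (match qr with
       | Sum.inl (l, Sum.inl (Sum.inr s)) => -(W pr (l, Sum.inr s))
       | _ => 0)

variable (W : Matrix ((Fin k × ((Fin m1 ⊕ Fin m2) ⊕ Fin p)) ⊕ Fin r) (Fin k × (Fin n1 ⊕ Fin m2)) ℝ)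

lemma Nmat_apply (pr qr) : Nmat k m1 m2 p r n1 W pr qr =
    rowOK k m1 m2 p r pr *
      (match qr with
       | Sum.inl (l, Sum.inl (Sum.inr s)) => -(W pr (l, Sum.inr s))
       | _ => 0) := rfl

lemma Nmat_sq : Nmat k m1 m2 p r n1 W * Nmat k m1 m2 p r n1 W = 0 := by
  ext pr qr
  rw [Matrix.mul_apply, Matrix.zero_apply]
  apply Finset.sum_eq_zero
  rintro (⟨l, (a | s) | b⟩ | iK) -
  · rw [Nmat_apply, mul_zero, zero_mul]
  · rw [Nmat_apply (pr := Sum.inl (l, Sum.inl (Sum.inr s))), show rowOK k m1 m2 p r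
      (Sum.inl (l, Sum.inl (Sum.inr s))) = 0 from rfl, zero_mul, mul_zero]
  · rw [Nmat_apply, mul_zero, zero_mul]
  · rw [Nmat_apply, mul_zero, zero_mul]

lemma isUnit_det_one_add_Nmat : IsUnit (1 + Nmat k m1 m2 p r n1 W).det := by
  have h : (1 - Nmat k m1 m2 p r n1 W) * (1 + Nmat k m1 m2 p r n1 W) = 1 := by
    rw [mul_add, mul_one, sub_mul, one_mul, Nmat_sq, sub_zero, sub_add_cancel]
  have h' := congrArg Matrix.det h
  rw [Matrix.det_mul, Matrix.det_one] at h'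
  exact IsUnit.of_mul_eq_one _ (by rw [mul_comm]; exact h')

variable (hW : ∀ (i : Fin k) (s : Fin m2) q,
    W (Sum.inl (i, Sum.inl (Sum.inr s))) q = if q = (i, Sum.inr s) then 1 else 0)

include hW in
lemma NW_apply (pr) (j : Fin k) (y : Fin n1 ⊕ Fin m2) :
    (Nmat k m1 m2 p r n1 W * W) pr (j, y) =
      rowOK k m1 m2 p r pr *
        (match y with
         | Sum.inr t => -(W pr (j, Sum.inr t))
         | _ => 0) := by
  rw [Matrix.mul_apply, Fintype.sum_sum_type]
  have h2 : (∑ iK : Fin r, Nmat k m1 m2 p r n1 W pr (Sum.inr iK) * W (Sum.inr iK) (j, y)) = 0 :=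
    Finset.sum_eq_zero fun iK _ => by rw [Nmat_apply, mul_zero, zero_mul]
  rw [h2, add_zero, Fintype.sum_prod_type]
  have h3 : ∀ l : Fin k,
      (∑ x : (Fin m1 ⊕ Fin m2) ⊕ Fin p,
        Nmat k m1 m2 p r n1 W pr (Sum.inl (l, x)) * W (Sum.inl (l, x)) (j, y)) =
      ∑ s : Fin m2, (rowOK k m1 m2 p r pr * -(W pr (l, Sum.inr s))) *
        (if ((j, y) : Fin k × (Fin n1 ⊕ Fin m2)) = (l, Sum.inr s) then 1 else 0) := by
    intro l
    rw [Fintype.sum_sum_type, Fintype.sum_sum_type]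
    have e1 : (∑ a : Fin m1,
        Nmat k m1 m2 p r n1 W pr (Sum.inl (l, Sum.inl (Sum.inl a))) *
          W (Sum.inl (l, Sum.inl (Sum.inl a))) (j, y)) = 0 :=
      Finset.sum_eq_zero fun a _ => by rw [Nmat_apply, mul_zero, zero_mul]
    have e2 : (∑ b : Fin p,
        Nmat k m1 m2 p r n1 W pr (Sum.inl (l, Sum.inr b)) *
          W (Sum.inl (l, Sum.inr b)) (j, y)) = 0 :=
      Finset.sum_eq_zero fun b _ => by rw [Nmat_apply, mul_zero, zero_mul]
    rw [e1, e2, zero_add, add_zero]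
    refine Finset.sum_congr rfl fun s _ => by rw [Nmat_apply, hW]
  rw [Finset.sum_congr rfl fun l _ => h3 l]
  cases y with
  | inl c =>
    have : ∀ (l : Fin k) (s : Fin m2),
        (if ((j, Sum.inl c) : Fin k × (Fin n1 ⊕ Fin m2)) = (l, Sum.inr s) then (1:ℝ) else 0) = 0 := by
      intro l s
      rw [if_neg]
      simp
    simp only [this, mul_zero, Finset.sum_const_zero]
  | inr t =>
    have : ∀ (l : Fin k) (s : Fin m2),
        (if ((j, Sum.inr t) : Fin k × (Fin n1 ⊕ Fin m2)) = (l, Sum.inr s) then (1:ℝ) else 0) =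
          if j = l then (if t = s then 1 else 0) else 0 := by
      intro l s
      simp only [Prod.mk.injEq, Sum.inr.injEq, ite_and]
    simp only [this, mul_ite, mul_one, mul_zero]
    rw [Finset.sum_comm]
    simp only [Finset.sum_ite_eq, Finset.mem_univ, if_true]

include hW in
lemma final_idrow (i : Fin k) (s : Fin m2) (q : Fin k × (Fin n1 ⊕ Fin m2)) :
    (((1 + Nmat k m1 m2 p r n1 W) * W : Matrix ((Fin k × ((Fin m1 ⊕ Fin m2) ⊕ Fin p)) ⊕ Fin r) (Fin k × (Fin n1 ⊕ Fin m2)) ℝ)) (Sum.inl (i, Sum.inl (Sum.inr s))) q =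
      if q = (i, Sum.inr s) then 1 else 0 := by
  obtain ⟨j, y⟩ := q
  rw [Matrix.add_mul, Matrix.one_mul, Matrix.add_apply, NW_apply W hW,
    show rowOK k m1 m2 p r (Sum.inl (i, Sum.inl (Sum.inr s))) = 0 from rfl, zero_mul, add_zero, hW]

include hW in
lemma final_inr (pr) (hpr : rowOK k m1 m2 p r pr = 1) (j : Fin k) (t : Fin m2) :
    (((1 + Nmat k m1 m2 p r n1 W) * W : Matrix ((Fin k × ((Fin m1 ⊕ Fin m2) ⊕ Fin p)) ⊕ Fin r) (Fin k × (Fin n1 ⊕ Fin m2)) ℝ)) pr (j, Sum.inr t) = 0 := by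
  rw [Matrix.add_mul, Matrix.one_mul, Matrix.add_apply, NW_apply W hW, hpr, one_mul]
  exact add_neg_cancel _

include hW in
lemma final_inl (pr) (j : Fin k) (c : Fin n1) :
    (((1 + Nmat k m1 m2 p r n1 W) * W : Matrix ((Fin k × ((Fin m1 ⊕ Fin m2) ⊕ Fin p)) ⊕ Fin r) (Fin k × (Fin n1 ⊕ Fin m2)) ℝ)) pr (j, Sum.inl c) = W pr (j, Sum.inl c) := by
  rw [Matrix.add_mul, Matrix.one_mul, Matrix.add_apply, NW_apply W hW, mul_zero, add_zero]

end Nsec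

section Main

lemma Fmat_apply {R C : Type*} [Fintype R] [Fintype C] {k : ℕ} (E A : Matrix R C ℝ)
    (i j : Fin k) (x : R) (y : C) :
    Fmat k E A (i, x) (j, y) =
      if j.val = i.val then E x y else if j.val = i.val + 1 then A x y else 0 := rfl

lemma FmatK_inl {R C : Type*} [Fintype R] [Fintype C] {k r : ℕ} (E A : Matrix R C ℝ)
    (K : Matrix (Fin r) C ℝ) (pr : Fin k × R) (q : Fin k × C) :
    FmatK k E A K (Sum.inl pr) q = Fmat k E A pr q := rfl

lemma FmatK_inr {R C : Type*} [Fintype R] [Fintype C] {k r : ℕ} (E A : Matrix R C ℝ)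
    (K : Matrix (Fin r) C ℝ) (iK : Fin r) (q : Fin k × C) :
    FmatK k E A K (Sum.inr iK) q = if q.1.val = 1 then K iK q.2 else 0 := rfl

/-- Column reindexing. -/
def ecEquiv (k n1 m2 : ℕ) :
    (Fin k × Fin m2) ⊕ (Fin k × Fin n1) ≃ Fin k × (Fin n1 ⊕ Fin m2) where
  toFun := fun x => match x with
    | Sum.inl (i, s) => (i, Sum.inr s)
    | Sum.inr (i, c) => (i, Sum.inl c)
  invFun := fun q => match q with
    | (i, Sum.inl c) => Sum.inr (i, c)
    | (i, Sum.inr s) => Sum.inl (i, s)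
  left_inv := by rintro (⟨i, s⟩ | ⟨i, c⟩) <;> rfl
  right_inv := by rintro ⟨i, (c | s)⟩ <;> rfl

/-- Row reindexing. -/
def erEquiv (k m1 m2 p r : ℕ) :
    (Fin k × Fin m2) ⊕ ((Fin k × (Fin m1 ⊕ Fin p)) ⊕ Fin r) ≃
      (Fin k × ((Fin m1 ⊕ Fin m2) ⊕ Fin p)) ⊕ Fin r where
  toFun := fun x => match x with
    | Sum.inl (i, s) => Sum.inl (i, Sum.inl (Sum.inr s))
    | Sum.inr (Sum.inl (i, Sum.inl a)) => Sum.inl (i, Sum.inl (Sum.inl a))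
    | Sum.inr (Sum.inl (i, Sum.inr b)) => Sum.inl (i, Sum.inr b)
    | Sum.inr (Sum.inr iK) => Sum.inr iK
  invFun := fun x => match x with
    | Sum.inl (i, Sum.inl (Sum.inl a)) => Sum.inr (Sum.inl (i, Sum.inl a))
    | Sum.inl (i, Sum.inl (Sum.inr s)) => Sum.inl (i, s)
    | Sum.inl (i, Sum.inr b) => Sum.inr (Sum.inl (i, Sum.inr b))
    | Sum.inr iK => Sum.inr (Sum.inr iK)
  left_inv := by rintro (⟨i, s⟩ | (⟨i, (a | b)⟩ | iK)) <;> rfl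
  right_inv := by rintro (⟨i, ((a | s) | b)⟩ | iK) <;> rfl

variable {m1 n1 m2 p r : ℕ}
  (E11 A11 : Matrix (Fin m1) (Fin n1) ℝ)
  (E12 A12 : Matrix (Fin m1) (Fin m2) ℝ)
  (A22 : Matrix (Fin m2) (Fin m2) ℝ)
  (C11 : Matrix (Fin p) (Fin n1) ℝ) (C12 : Matrix (Fin p) (Fin m2) ℝ)
  (K11 : Matrix (Fin r) (Fin n1) ℝ) (K12 : Matrix (Fin r) (Fin m2) ℝ)

lemma keyK (k : ℕ) :
    (FmatK k
        (Matrix.fromRows (Matrix.fromBlocks E11 E12 0 (1 : Matrix (Fin m2) (Fin m2) ℝ))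
          ((0 : Matrix (Fin p) (Fin n1 ⊕ Fin m2) ℝ)))
        (Matrix.fromRows (Matrix.fromBlocks A11 A12 0 A22)
          (Matrix.fromCols C11 C12))
        (Matrix.fromCols K11 K12)).rank =
      k * m2 +
        (FmatK k (Matrix.fromRows E11 (0 : Matrix (Fin p) (Fin n1) ℝ))
          (Matrix.fromRows A11 C11) K11).rank := by
  set EB := Matrix.fromRows (Matrix.fromBlocks E11 E12 0 (1 : Matrix (Fin m2) (Fin m2) ℝ))
    ((0 : Matrix (Fin p) (Fin n1 ⊕ Fin m2) ℝ)) with hEB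
  set AB := Matrix.fromRows (Matrix.fromBlocks A11 A12 0 A22) (Matrix.fromCols C11 C12)
    with hAB
  set KB := Matrix.fromCols K11 K12 with hKB
  set M := FmatK k EB AB KB with hMdef
  set W := M * Qm k n1 A22 with hWdef
  -- idrow rows of W are delta rows
  have hW : ∀ (i : Fin k) (s : Fin m2) (q : Fin k × (Fin n1 ⊕ Fin m2)),
      W (Sum.inl (i, Sum.inl (Sum.inr s))) q = if q = (i, Sum.inr s) then 1 else 0 := by
    intro i s q
    rw [hWdef, Matrix.mul_apply]
    refine core_band A22 i s _ ?_ ?_ q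
    · intro l c
      rw [hMdef, FmatK_inl, Fmat_apply, hEB, hAB]
      simp only [fromRows_apply_inl, fromBlocks_apply₂₁, Matrix.zero_apply]
      split_ifs <;> rfl
    · intro l u
      rw [hMdef, FmatK_inl, Fmat_apply, hEB, hAB]
      simp only [fromRows_apply_inl, fromBlocks_apply₂₂]
  -- `inl` columns of `X * Q` agree with those of `X`
  have hQcol : ∀ (lq : Fin k × (Fin n1 ⊕ Fin m2)) (j : Fin k) (c : Fin n1),
      Qm k n1 A22 lq (j, Sum.inl c) = if lq = (j, Sum.inl c) then 1 else 0 := by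
    rintro ⟨l, (c' | u)⟩ j c
    · rw [Qm_ll]
      refine if_congr ?_ rfl rfl
      simp only [Prod.mk.injEq, Sum.inl.injEq]
    · rw [Qm_rl]
      symm
      rw [if_neg]
      simp
  have hMp_inl : ∀ (pr : (Fin k × ((Fin m1 ⊕ Fin m2) ⊕ Fin p)) ⊕ Fin r) (j : Fin k) (c : Fin n1),
      W pr (j, Sum.inl c) = M pr (j, Sum.inl c) := by
    intro pr j c
    rw [hWdef, Matrix.mul_apply]
    simp only [hQcol, mul_ite, mul_one, mul_zero, Finset.sum_ite_eq', Finset.mem_univ, if_true]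
  -- the final matrix after row/column operations
  have hsub : ((1 + Nmat k m1 m2 p r n1 W) * W).submatrix (erEquiv k m1 m2 p r) (ecEquiv k n1 m2)
      = fromBlocks (1 : Matrix (Fin k × Fin m2) (Fin k × Fin m2) ℝ) 0 0
          (FmatK k (Matrix.fromRows E11 (0 : Matrix (Fin p) (Fin n1) ℝ))
            (Matrix.fromRows A11 C11) K11) := by
    ext x y
    obtain (⟨i, s⟩ | pr') := x <;> obtain (⟨j, t⟩ | ⟨j, c⟩) := y
    · -- identity block
      rw [Matrix.submatrix_apply, show erEquiv k m1 m2 p r (Sum.inl (i, s)) =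
          Sum.inl (i, Sum.inl (Sum.inr s)) from rfl,
        show ecEquiv k n1 m2 (Sum.inl (j, t)) = (j, Sum.inr t) from rfl,
        final_idrow W hW, fromBlocks_apply₁₁, Matrix.one_apply]
      refine if_congr ?_ rfl rfl
      simp only [Prod.mk.injEq, Sum.inr.injEq]
      exact ⟨fun ⟨h1, h2⟩ => ⟨h1.symm, h2.symm⟩, fun ⟨h1, h2⟩ => ⟨h1.symm, h2.symm⟩⟩
    · rw [Matrix.submatrix_apply, show erEquiv k m1 m2 p r (Sum.inl (i, s)) =
          Sum.inl (i, Sum.inl (Sum.inr s)) from rfl,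
        show ecEquiv k n1 m2 (Sum.inr (j, c)) = (j, Sum.inl c) from rfl,
        final_idrow W hW, fromBlocks_apply₁₂, Matrix.zero_apply, if_neg]
      simp
    · -- zero block below identity
      rw [Matrix.submatrix_apply, show ecEquiv k n1 m2 (Sum.inl (j, t)) = (j, Sum.inr t) from rfl,
        fromBlocks_apply₂₁, Matrix.zero_apply]
      obtain (⟨i, (a | b)⟩ | iK) := pr'
      · exact final_inr W hW (Sum.inl (i, Sum.inl (Sum.inl a))) rfl j t
      · exact final_inr W hW (Sum.inl (i, Sum.inr b)) rfl j t
      · exact final_inr W hW (Sum.inr iK) rfl j t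
    · -- the small F-matrix block
      rw [Matrix.submatrix_apply, show ecEquiv k n1 m2 (Sum.inr (j, c)) = (j, Sum.inl c) from rfl,
        fromBlocks_apply₂₂]
      obtain (⟨i, (a | b)⟩ | iK) := pr'
      · rw [show erEquiv k m1 m2 p r (Sum.inr (Sum.inl (i, Sum.inl a))) =
            Sum.inl (i, Sum.inl (Sum.inl a)) from rfl,
          final_inl W hW, hMp_inl, hMdef, FmatK_inl, Fmat_apply, FmatK_inl, Fmat_apply,
          hEB, hAB]
        simp only [fromRows_apply_inl, fromBlocks_apply₁₁]
      · rw [show erEquiv k m1 m2 p r (Sum.inr (Sum.inl (i, Sum.inr b))) =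
            Sum.inl (i, Sum.inr b) from rfl,
          final_inl W hW, hMp_inl, hMdef, FmatK_inl, Fmat_apply, FmatK_inl, Fmat_apply,
          hEB, hAB]
        simp only [fromRows_apply_inr, fromCols_apply_inl, Matrix.zero_apply]
      · rw [show erEquiv k m1 m2 p r (Sum.inr (Sum.inr iK)) = Sum.inr iK from rfl,
          final_inl W hW, hMp_inl, hMdef, FmatK_inr, FmatK_inr, hKB]
        simp only [fromCols_apply_inl]
  -- rank chain
  calc M.rank = W.rank := by
        rw [hWdef, rank_mul_eq_left_of_isUnit_det _ _ (isUnit_det_Qm A22)]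
    _ = ((1 + Nmat k m1 m2 p r n1 W) * W).rank := by
        rw [rank_mul_eq_right_of_isUnit_det _ _ (isUnit_det_one_add_Nmat W)]
    _ = (((1 + Nmat k m1 m2 p r n1 W) * W).submatrix (erEquiv k m1 m2 p r)
          (ecEquiv k n1 m2)).rank := (rank_submatrix_equiv _ _ _).symm
    _ = k * m2 + (FmatK k (Matrix.fromRows E11 (0 : Matrix (Fin p) (Fin n1) ℝ))
          (Matrix.fromRows A11 C11) K11).rank := by
        rw [hsub, rank_fromBlocks_diag, Matrix.rank_one, Fintype.card_prod, Fintype.card_fin,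
          Fintype.card_fin]

end Main

lemma rank_FmatK_empty {R C : Type*} [Fintype R] [Fintype C] [DecidableEq R] [DecidableEq C]
    (k : ℕ) (E A : Matrix R C ℝ) (K : Matrix (Fin 0) C ℝ) :
    (FmatK k E A K).rank = (Fmat k E A).rank := by
  have h : FmatK k E A K =
      (Fmat k E A).submatrix (Equiv.sumEmpty (Fin k × R) (Fin 0)) (Equiv.refl _) := by
    ext x q
    obtain (pr | iK) := x
    · rfl
    · exact iK.elim0
  rw [h, rank_submatrix_equiv]


/-- Rank reduction for the Kalman decomposition: with `E = [E11 E12; 0 I]`,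
`A = [A11 A12; 0 A22]`, `C = [C11 C12]`, `K = [K11 K12]`, `Ē = [E; 0]`, `Ā = [A; C]`,
`Ē11 = [E11; 0]`, `Ā11 = [A11; C11]`, we have
`rank F_{k,[Ē,Ā]} = k·m2 + rank F_{k,[Ē11,Ā11]}` for `k ≥ 1` and
`rank F_{k,[Ē,Ā,K]} = k·m2 + rank F_{k,[Ē11,Ā11,K11]}` for `k ≥ 2`. -/
theorem stmt_16 {m1 n1 m2 p r : ℕ}
    (E11 A11 : Matrix (Fin m1) (Fin n1) ℝ)
    (E12 A12 : Matrix (Fin m1) (Fin m2) ℝ)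
    (A22 : Matrix (Fin m2) (Fin m2) ℝ)
    (C11 : Matrix (Fin p) (Fin n1) ℝ) (C12 : Matrix (Fin p) (Fin m2) ℝ)
    (K11 : Matrix (Fin r) (Fin n1) ℝ) (K12 : Matrix (Fin r) (Fin m2) ℝ) :
    (∀ k : ℕ, 1 ≤ k →
      (Fmat k
          (Matrix.fromRows (Matrix.fromBlocks E11 E12 0 (1 : Matrix (Fin m2) (Fin m2) ℝ))
            ((0 : Matrix (Fin p) (Fin n1 ⊕ Fin m2) ℝ)))
          (Matrix.fromRows (Matrix.fromBlocks A11 A12 0 A22)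
            (Matrix.fromCols C11 C12))).rank =
        k * m2 +
          (Fmat k (Matrix.fromRows E11 (0 : Matrix (Fin p) (Fin n1) ℝ))
            (Matrix.fromRows A11 C11)).rank) ∧
    (∀ k : ℕ, 2 ≤ k →
      (FmatK k
          (Matrix.fromRows (Matrix.fromBlocks E11 E12 0 (1 : Matrix (Fin m2) (Fin m2) ℝ))
            ((0 : Matrix (Fin p) (Fin n1 ⊕ Fin m2) ℝ)))
          (Matrix.fromRows (Matrix.fromBlocks A11 A12 0 A22)
            (Matrix.fromCols C11 C12))
          (Matrix.fromCols K11 K12)).rank =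
        k * m2 +
          (FmatK k (Matrix.fromRows E11 (0 : Matrix (Fin p) (Fin n1) ℝ))
            (Matrix.fromRows A11 C11) K11).rank) := by
  
  constructor
  · intro k _
    have h := keyK E11 A11 E12 A12 A22 C11 C12 (0 : Matrix (Fin 0) (Fin n1) ℝ)
      (0 : Matrix (Fin 0) (Fin m2) ℝ) k
    rw [rank_FmatK_empty, rank_FmatK_empty] at h
    exact h
  · intro k _
    exact keyK E11 A11 E12 A12 A22 C11 C12 K11 K12 k
end

section
/- Let E11, A11 ∈ ℝ^{m1×n1}, E12, A12 ∈ ℝ^{m1×m2}, A22 ∈ ℝ^{m2×m2}, C11 ∈ ℝ^{p×n1}, C12 ∈ ℝ^{p×m2}, K11 ∈ ℝ^{r×n1}, K12 ∈ ℝ^{r×m2}, with n := n1 + m2 ≥ 1. Set E = [E11 E12; 0 I_{m2}], A = [A11 A12; 0 A22], C = [C11 C12], K = [K11 K12], Ē = [E; 0] ∈ ℝ^{(m1+m2+p)×n}, Ā = [A; C] ∈ ℝ^{(m1+m2+p)×n}. Then rank F_{n+1,[Ē,Ā]} = rank F_{n+1,[Ē,Ā,K]} if and only if W*_{[E11,A11,0,C11]}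 ∩ A11⁻¹(im E11) ⊆ ker K11. -/
open Matrix

namespace Stmt17Aux

set_option linter.unusedSectionVars false

variable {R S : Type*} [Fintype R] [Fintype S]

/-- The chain `U 0 = ⊥`, `U (i+1) = M⁻¹(N · U i)`. -/
noncomputable def U (M N : Matrix R S ℝ) : ℕ → Submodule ℝ (S → ℝ)
  | 0 => ⊥
  | i + 1 => Submodule.comap M.mulVecLin (Submodule.map N.mulVecLin (U M N i))

lemma mem_U_succ {M N : Matrix R S ℝ} {i : ℕ} {x : S → ℝ} :
    x ∈ U M N (i + 1) ↔ ∃ y ∈ U M N i, M *ᵥ x = N *ᵥ y := by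
  simp only [U, Submodule.mem_comap, Submodule.mem_map, mulVecLin_apply]
  constructor
  · rintro ⟨y, hy, h⟩; exact ⟨y, hy, h.symm⟩
  · rintro ⟨y, hy, h⟩; exact ⟨y, hy, h.symm⟩

/-- blocks of a vector indexed by `Fin k × S`, extended by zero. -/
def blk {k : ℕ} (x : Fin k × S → ℝ) (j : ℕ) : S → ℝ :=
  fun s => if h : j < k then x (⟨j, h⟩, s) else 0

lemma blk_of_ge {k : ℕ} (x : Fin k × S → ℝ) {j : ℕ} (h : k ≤ j) : blk x j = 0 := by
  funext s; simp [blk, Nat.not_lt.2 h]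

lemma extract {M N : Matrix R S ℝ} (y : ℕ → S → ℝ)
    (hrel : ∀ j, M *ᵥ y j + N *ᵥ y (j + 1) = 0) :
    ∀ i j, y (j + i) = 0 → y j ∈ U M N i := by
  intro i
  induction i with
  | zero => intro j h; simp only [Nat.add_zero] at h; simp [U, h]
  | succ i ih =>
    intro j h
    have h1 : y (j + 1) ∈ U M N i := ih (j + 1) (by rwa [Nat.add_right_comm])
    rw [mem_U_succ]
    refine ⟨-y (j + 1), neg_mem h1, ?_⟩
    have := hrel j
    rw [Matrix.mulVec_neg]
    linear_combination (norm := module) this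

lemma construct {M N : Matrix R S ℝ} :
    ∀ i (w : S → ℝ), w ∈ U M N i →
      ∃ y : ℕ → S → ℝ, y 0 = w ∧ (∀ j, M *ᵥ y j + N *ᵥ y (j + 1) = 0) ∧
        ∀ j, i ≤ j → y j = 0 := by
  intro i
  induction i with
  | zero =>
    intro w hw
    refine ⟨fun _ => 0, ?_, fun j => by simp, fun j _ => rfl⟩
    simpa [U] using hw.symm
  | succ i ih =>
    intro w hw
    rw [mem_U_succ] at hw
    obtain ⟨v, hv, hMv⟩ := hw
    obtain ⟨z, hz0, hzrel, hzzero⟩ := ih (-v) (neg_mem hv)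
    refine ⟨fun j => Nat.rec w (fun j _ => z j) j, rfl, ?_, ?_⟩
    · intro j
      cases j with
      | zero =>
        show M *ᵥ w + N *ᵥ z 0 = 0
        rw [hz0, Matrix.mulVec_neg, hMv]; abel
      | succ j => exact hzrel j
    · intro j hj
      cases j with
      | zero => omega
      | succ j => exact hzzero j (by omega)

lemma mulVec_Fmat {k : ℕ} (M N : Matrix R S ℝ) (x : Fin k × S → ℝ) (i : Fin k) (t : R) :
    (Fmat k M N *ᵥ x) (i, t) = (M *ᵥ blk x i + N *ᵥ blk x ((i : ℕ) + 1)) t := by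
  have hsplit : ∀ (j : Fin k) (s : S), Fmat k M N (i, t) (j, s) * x (j, s) =
      (if j = i then M t s * x (j, s) else 0) +
      (if (j : ℕ) = (i : ℕ) + 1 then N t s * x (j, s) else 0) := by
    intro j s
    simp only [Fmat, Matrix.of_apply]
    rcases eq_or_ne j i with h | h
    · subst h
      have h2 : ¬ ((j : ℕ) = (j : ℕ) + 1) := by omega
      simp [h2]
    · have h1 : ¬ ((j : ℕ) = (i : ℕ)) := by
        simpa [Fin.val_eq_val] using h
      rcases eq_or_ne ((j : ℕ)) ((i : ℕ) + 1) with h2 | h2 <;> simp [h1, h2, h]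
  calc (Fmat k M N *ᵥ x) (i, t)
      = ∑ j : Fin k, ∑ s : S, Fmat k M N (i, t) (j, s) * x (j, s) := by
        simp [Matrix.mulVec, dotProduct, Fintype.sum_prod_type]
    _ = ∑ j : Fin k, ((if j = i then ∑ s : S, M t s * x (j, s) else 0) +
          (if (j : ℕ) = (i : ℕ) + 1 then ∑ s : S, N t s * x (j, s) else 0)) := by
        refine Finset.sum_congr rfl fun j _ => ?_
        simp only [hsplit, Finset.sum_add_distrib, Finset.sum_ite_irrel, Finset.sum_const_zero]
    _ = (∑ s : S, M t s * x (i, s)) +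
          ∑ j : Fin k, (if (j : ℕ) = (i : ℕ) + 1 then ∑ s : S, N t s * x (j, s) else 0) := by
        rw [Finset.sum_add_distrib, Finset.sum_ite_eq' Finset.univ i]
        simp
    _ = (M *ᵥ blk x i) t + (N *ᵥ blk x ((i : ℕ) + 1)) t := by
        congr 1
        · simp only [Matrix.mulVec, dotProduct, blk]
          refine Finset.sum_congr rfl fun s _ => ?_
          rw [dif_pos i.isLt]
        · by_cases h : (i : ℕ) + 1 < k
          · rw [Finset.sum_eq_single ⟨(i : ℕ) + 1, h⟩]
            · simp [Matrix.mulVec, dotProduct, blk, dif_pos h]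
            · intro j _ hj
              rw [if_neg]
              simpa [Fin.ext_iff] using hj
            · simp
          · rw [Finset.sum_eq_zero, blk_of_ge x (by omega)]
            · simp
            · intro j _
              rw [if_neg]
              omega
    _ = (M *ᵥ blk x i + N *ᵥ blk x ((i : ℕ) + 1)) t := rfl

lemma mem_ker_Fmat_iff {k : ℕ} (M N : Matrix R S ℝ) (x : Fin k × S → ℝ) :
    x ∈ LinearMap.ker (Fmat k M N).mulVecLin ↔
      ∀ j : ℕ, M *ᵥ blk x j + N *ᵥ blk x (j + 1) = 0 := by
  rw [LinearMap.mem_ker, mulVecLin_apply]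
  constructor
  · intro h j
    by_cases hj : j < k
    · funext t
      have h2 := congrFun h (⟨j, hj⟩, t)
      rw [mulVec_Fmat] at h2
      simpa using h2
    · rw [blk_of_ge x (le_of_not_gt hj), blk_of_ge x (by omega)]
      simp
  · intro h
    funext q
    obtain ⟨i, t⟩ := q
    rw [Pi.zero_apply, mulVec_Fmat, h (i : ℕ)]
    rfl

/-- the extra block row. -/
noncomputable def Gmat (k : ℕ) {r : ℕ} (K : Matrix (Fin r) S ℝ) :
    Matrix (Fin r) (Fin k × S) ℝ :=
  Matrix.of fun i q => if q.1.val = 1 then K i q.2 else 0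

lemma mem_ker_Gmat_iff {k r : ℕ} (K : Matrix (Fin r) S ℝ) (hk : 1 < k)
    (x : Fin k × S → ℝ) :
    x ∈ LinearMap.ker (Gmat k K).mulVecLin ↔ K *ᵥ blk x 1 = 0 := by
  have hmv : ∀ i : Fin r, ((Gmat k K) *ᵥ x) i = (K *ᵥ blk x 1) i := by
    intro i
    simp only [Matrix.mulVec, dotProduct, Fintype.sum_prod_type, Gmat, Matrix.of_apply]
    rw [Finset.sum_eq_single (⟨1, hk⟩ : Fin k)]
    · refine Finset.sum_congr rfl fun s _ => ?_
      simp [blk, hk]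
    · intro j _ hj
      rw [Finset.sum_eq_zero]
      intro s _
      rw [if_neg, zero_mul]
      simpa [Fin.ext_iff] using hj
    · simp
  rw [LinearMap.mem_ker, mulVecLin_apply]
  constructor
  · intro h; funext i; rw [← hmv i, h]
  · intro h; funext i; rw [hmv i, h]

lemma rank_fromRows_eq_iff {α γ : Type*} [Fintype α] [Fintype γ]
    (F : Matrix α S ℝ) (G : Matrix γ S ℝ) :
    F.rank = (fromRows F G).rank ↔
      LinearMap.ker F.mulVecLin ≤ LinearMap.ker G.mulVecLin := by
  have hker : LinearMap.ker (fromRows F G).mulVecLin =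
      LinearMap.ker F.mulVecLin ⊓ LinearMap.ker G.mulVecLin := by
    ext x
    simp only [LinearMap.mem_ker, mulVecLin_apply, Submodule.mem_inf, fromRows_mulVec]
    constructor
    · intro h
      exact ⟨funext fun i => congrFun h (Sum.inl i), funext fun i => congrFun h (Sum.inr i)⟩
    · rintro ⟨h1, h2⟩
      funext i
      cases i <;> simp [h1, h2]
  have h1 := LinearMap.finrank_range_add_finrank_ker F.mulVecLin
  have h2 := LinearMap.finrank_range_add_finrank_ker (fromRows F G).mulVecLin
  simp only [Matrix.rank]
  constructor
  · intro hr
    have hfr : Module.finrank ℝ (LinearMap.ker F.mulVecLin) =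
        Module.finrank ℝ (LinearMap.ker (fromRows F G).mulVecLin) := by omega
    have heq : LinearMap.ker (fromRows F G).mulVecLin = LinearMap.ker F.mulVecLin := by
      refine Submodule.eq_of_le_of_finrank_le ?_ hfr.le
      rw [hker]; exact inf_le_left
    intro x hx
    have hx2 : x ∈ LinearMap.ker (fromRows F G).mulVecLin := heq ▸ hx
    rw [hker] at hx2
    exact hx2.2
  · intro hle
    have heq : LinearMap.ker (fromRows F G).mulVecLin = LinearMap.ker F.mulVecLin := by
      rw [hker, inf_eq_left.mpr hle]
    rw [heq] at h2
    omega

/-- The main generic kernel characterization. -/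
lemma ker_iff_main {k r : ℕ} (hk : 2 ≤ k) (M N : Matrix R S ℝ) (K : Matrix (Fin r) S ℝ) :
    (LinearMap.ker (Fmat k M N).mulVecLin ≤ LinearMap.ker (Gmat k K).mulVecLin) ↔
      U M N (k - 1) ⊓ Submodule.comap N.mulVecLin (LinearMap.range M.mulVecLin) ≤
        LinearMap.ker K.mulVecLin := by
  constructor
  · intro hle w hw
    rw [Submodule.mem_inf] at hw
    obtain ⟨hw1, hw2⟩ := hw
    rw [Submodule.mem_comap, LinearMap.mem_range] at hw2
    obtain ⟨u, hu⟩ := hw2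
    rw [mulVecLin_apply, mulVecLin_apply] at hu
    obtain ⟨y, hy0, hyrel, hyz⟩ := construct (k - 1) w hw1
    set y' : ℕ → S → ℝ := fun j => Nat.rec (-u) (fun j _ => y j) j with hy'
    have hrel' : ∀ j, M *ᵥ y' j + N *ᵥ y' (j + 1) = 0 := by
      intro j
      cases j with
      | zero =>
        show M *ᵥ (-u) + N *ᵥ y 0 = 0
        rw [hy0, Matrix.mulVec_neg, hu]
        abel
      | succ j => exact hyrel j
    set x : Fin k × S → ℝ := fun q => y' (q.1 : ℕ) q.2 with hx
    have hblk : ∀ j, blk x j = y' j := by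
      intro j
      by_cases hj : j < k
      · funext s; simp [blk, hj, hx]
      · rw [blk_of_ge x (le_of_not_gt hj)]
        cases j with
        | zero => omega
        | succ j => exact (hyz j (by omega)).symm
    have hxker : x ∈ LinearMap.ker (Fmat k M N).mulVecLin := by
      rw [mem_ker_Fmat_iff]
      intro j; rw [hblk, hblk]; exact hrel' j
    have hxg := hle hxker
    rw [mem_ker_Gmat_iff K (by omega)] at hxg
    rw [hblk 1] at hxg
    rw [LinearMap.mem_ker, mulVecLin_apply]
    rw [show y' 1 = y 0 from rfl, hy0] at hxg
    exact hxg
  · intro hle x hx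
    rw [mem_ker_Fmat_iff] at hx
    rw [mem_ker_Gmat_iff K (by omega)]
    have h1 : blk x 1 ∈ U M N (k - 1) := by
      refine extract (blk x) hx (k - 1) 1 ?_
      rw [show 1 + (k - 1) = k by omega, blk_of_ge x (le_refl k)]
    have h2 : blk x 1 ∈ Submodule.comap N.mulVecLin (LinearMap.range M.mulVecLin) := by
      rw [Submodule.mem_comap, LinearMap.mem_range]
      refine ⟨-blk x 0, ?_⟩
      rw [mulVecLin_apply, mulVecLin_apply, Matrix.mulVec_neg]
      have := hx 0
      linear_combination (norm := module) -this
    have h3 := hle (Submodule.mem_inf.mpr ⟨h1, h2⟩)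
    rw [LinearMap.mem_ker, mulVecLin_apply] at h3
    exact h3

/-- stabilization of monotone chains. -/
lemma stab_sup {V : Type*} [AddCommGroup V] [Module ℝ V] [FiniteDimensional ℝ V]
    (f : Submodule ℝ V → Submodule ℝ V) (hf : Monotone f)
    (W : ℕ → Submodule ℝ V) (hW0 : W 0 = ⊥) (hWs : ∀ i, W (i + 1) = f (W i))
    {m : ℕ} (hm : Module.finrank ℝ V ≤ m) : W m = ⨆ i, W i := by
  have hmono : ∀ i, W i ≤ W (i + 1) := by
    intro i
    induction i with
    | zero =>
      rw [hW0]; exact bot_le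
    | succ i ih => rw [hWs i, hWs (i + 1)]; exact hf ih
  have hmono' : Monotone W := monotone_nat_of_le_succ hmono
  have hstab : ∃ j ≤ Module.finrank ℝ V, W j = W (j + 1) := by
    by_contra hc
    push_neg at hc
    have hlt : ∀ j ≤ Module.finrank ℝ V, W j < W (j + 1) :=
      fun j hj => lt_of_le_of_ne (hmono j) (hc j hj)
    have hrank : ∀ j, j ≤ Module.finrank ℝ V + 1 → j ≤ Module.finrank ℝ (W j) := by
      intro j
      induction j with
      | zero => intro _; simp
      | succ j ih =>
        intro hj
        have hj' : j ≤ Module.finrank ℝ V := by omega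
        have := Submodule.finrank_lt_finrank_of_lt (hlt j hj')
        have := ih (by omega)
        omega
    have hA := hrank (Module.finrank ℝ V + 1) le_rfl
    have hB := Submodule.finrank_le (W (Module.finrank ℝ V + 1))
    omega
  obtain ⟨j, hj, hjeq⟩ := hstab
  have hconst : ∀ i, W (j + i) = W j := by
    intro i
    induction i with
    | zero => rfl
    | succ i ih =>
      rw [show j + (i + 1) = (j + i) + 1 from rfl, hWs, ih, ← hWs, ← hjeq]
  apply le_antisymm
  · exact le_iSup W m
  · apply iSup_le
    intro i
    rcases le_total i m with h | h
    · exact hmono' h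
    · have hAi : W i = W j := by
        have := hconst (i - j); rwa [Nat.add_sub_cancel' (by omega)] at this
      have hBm : W m = W j := by
        have := hconst (m - j); rwa [Nat.add_sub_cancel' (by omega)] at this
      rw [hAi, ← hBm]

lemma sum_elim_eq_iff {α β γ : Type*} [Zero γ] (a c : α → γ) (b d : β → γ) :
    Sum.elim a b = Sum.elim c d ↔ a = c ∧ b = d := by
  constructor
  · intro h
    exact ⟨funext fun i => congrFun h (Sum.inl i), funext fun i => congrFun h (Sum.inr i)⟩
  · rintro ⟨rfl, rfl⟩; rfl

end Stmt17Aux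

namespace Stmt17Aux

set_option linter.unusedSectionVars false

lemma fromColumns_mulVec' {α β γ : Type*} [Fintype α] [Fintype β]
    (C1 : Matrix γ α ℝ) (C2 : Matrix γ β ℝ) (x : α ⊕ β → ℝ) :
    fromCols C1 C2 *ᵥ x = C1 *ᵥ (x ∘ Sum.inl) + C2 *ᵥ (x ∘ Sum.inr) := by
  conv_lhs => rw [← Sum.elim_comp_inl_inr x]
  rw [fromCols_mulVec_sumElim]

variable {m1 n1 m2 p r : ℕ}
  (E11 A11 : Matrix (Fin m1) (Fin n1) ℝ)
  (E12 A12 : Matrix (Fin m1) (Fin m2) ℝ)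
  (A22 : Matrix (Fin m2) (Fin m2) ℝ)
  (C11 : Matrix (Fin p) (Fin n1) ℝ) (C12 : Matrix (Fin p) (Fin m2) ℝ)
  (K11 : Matrix (Fin r) (Fin n1) ℝ) (K12 : Matrix (Fin r) (Fin m2) ℝ)

/-- `Ē`. -/
noncomputable def Ebar : Matrix ((Fin m1 ⊕ Fin m2) ⊕ Fin p) (Fin n1 ⊕ Fin m2) ℝ :=
  Matrix.fromRows (Matrix.fromBlocks E11 E12 0 (1 : Matrix (Fin m2) (Fin m2) ℝ))
    (0 : Matrix (Fin p) (Fin n1 ⊕ Fin m2) ℝ)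

/-- `Ā`. -/
noncomputable def Abar : Matrix ((Fin m1 ⊕ Fin m2) ⊕ Fin p) (Fin n1 ⊕ Fin m2) ℝ :=
  Matrix.fromRows (Matrix.fromBlocks A11 A12 0 A22) (Matrix.fromCols C11 C12)

lemma Ebar_mulVec (x : Fin n1 ⊕ Fin m2 → ℝ) :
    Ebar (p := p) E11 E12 *ᵥ x =
      Sum.elim (Sum.elim (E11 *ᵥ (x ∘ Sum.inl) + E12 *ᵥ (x ∘ Sum.inr)) (x ∘ Sum.inr)) 0 := by
  rw [Ebar, fromRows_mulVec, fromBlocks_mulVec]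
  simp [Matrix.zero_mulVec, Matrix.one_mulVec]

lemma Abar_mulVec (x : Fin n1 ⊕ Fin m2 → ℝ) :
    Abar A11 A12 A22 C11 C12 *ᵥ x =
      Sum.elim (Sum.elim (A11 *ᵥ (x ∘ Sum.inl) + A12 *ᵥ (x ∘ Sum.inr)) (A22 *ᵥ (x ∘ Sum.inr)))
        (C11 *ᵥ (x ∘ Sum.inl) + C12 *ᵥ (x ∘ Sum.inr)) := by
  rw [Abar, fromRows_mulVec, fromBlocks_mulVec, fromColumns_mulVec']
  simp [Matrix.zero_mulVec]

/-- auxiliary chain on the `11`-coordinates. -/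
noncomputable def WE (E11 A11 : Matrix (Fin m1) (Fin n1) ℝ)
    (C11 : Matrix (Fin p) (Fin n1) ℝ) : ℕ → Submodule ℝ (Fin n1 → ℝ)
  | 0 => ⊥
  | j + 1 => Submodule.comap E11.mulVecLin
      (Submodule.map A11.mulVecLin (WE E11 A11 C11 j ⊓ LinearMap.ker C11.mulVecLin))

lemma mem_U_bar (j : ℕ) (x : Fin n1 ⊕ Fin m2 → ℝ) :
    x ∈ U (Ebar (p := p) E11 E12) (Abar A11 A12 A22 C11 C12) j ↔
      x ∘ Sum.inr = 0 ∧ x ∘ Sum.inl ∈ WE E11 A11 C11 j := by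
  induction j generalizing x with
  | zero =>
    simp only [U, Submodule.mem_bot, WE]
    constructor
    · rintro rfl
      exact ⟨rfl, by simp⟩
    · rintro ⟨h1, h2⟩
      funext i
      cases i with
      | inl a => exact congrFun h2 a
      | inr b => exact congrFun h1 b
  | succ j ih =>
    rw [mem_U_succ]
    constructor
    · rintro ⟨y, hy, heq⟩
      rw [ih] at hy
      obtain ⟨hy2, hy1⟩ := hy
      rw [Ebar_mulVec, Abar_mulVec, sum_elim_eq_iff] at heq
      obtain ⟨heq1, heq3⟩ := heq
      rw [sum_elim_eq_iff] at heq1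
      obtain ⟨heqa, heqb⟩ := heq1
      rw [hy2, Matrix.mulVec_zero] at heqa heqb heq3
      rw [add_zero] at heqa
      constructor
      · exact heqb
      · show x ∘ Sum.inl ∈ WE E11 A11 C11 (j + 1)
        rw [WE, Submodule.mem_comap, mulVecLin_apply]
        refine Submodule.mem_map.mpr ⟨y ∘ Sum.inl, ?_, ?_⟩
        · refine Submodule.mem_inf.mpr ⟨hy1, ?_⟩
          rw [LinearMap.mem_ker, mulVecLin_apply]
          rw [add_zero] at heq3
          exact heq3.symm
        · rw [mulVecLin_apply, ← heqa, heqb, Matrix.mulVec_zero, add_zero]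
    · rintro ⟨h2, h1⟩
      rw [WE, Submodule.mem_comap, mulVecLin_apply] at h1
      obtain ⟨w, hw, hweq⟩ := Submodule.mem_map.mp h1
      rw [Submodule.mem_inf] at hw
      rw [mulVecLin_apply] at hweq
      refine ⟨Sum.elim w 0, ?_, ?_⟩
      · rw [ih]
        exact ⟨rfl, by simpa using hw.1⟩
      · rw [Ebar_mulVec, Abar_mulVec]
        have hwk : C11 *ᵥ w = 0 := by
          have := hw.2
          rwa [LinearMap.mem_ker, mulVecLin_apply] at this
        rw [sum_elim_eq_iff, sum_elim_eq_iff]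
        refine ⟨⟨?_, ?_⟩, ?_⟩ <;>
          simp [Sum.elim_comp_inl, Sum.elim_comp_inr, Matrix.mulVec_zero, h2, hwk, hweq]

lemma WE_inf_ker (j : ℕ) :
    WE E11 A11 C11 j ⊓ LinearMap.ker C11.mulVecLin =
      WongW E11 A11 (0 : Matrix (Fin m1) (Fin 1) ℝ) C11 j := by
  induction j with
  | zero => simp [WE, WongW]
  | succ j ih =>
    show Submodule.comap E11.mulVecLin
        (Submodule.map A11.mulVecLin (WE E11 A11 C11 j ⊓ LinearMap.ker C11.mulVecLin)) ⊓
        LinearMap.ker C11.mulVecLin = _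
    rw [ih]
    show _ = Submodule.comap E11.mulVecLin
        (Submodule.map A11.mulVecLin (WongW E11 A11 0 C11 j) ⊔
          LinearMap.range (0 : Matrix (Fin m1) (Fin 1) ℝ).mulVecLin) ⊓
        LinearMap.ker C11.mulVecLin
    rw [Matrix.mulVecLin_zero, LinearMap.range_zero, sup_bot_eq]

lemma final_iff (n : ℕ) :
    (U (Ebar (p := p) E11 E12) (Abar A11 A12 A22 C11 C12) n ⊓
        Submodule.comap (Abar A11 A12 A22 C11 C12).mulVecLin
          (LinearMap.range (Ebar (p := p) E11 E12).mulVecLin) ≤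
        LinearMap.ker (fromCols K11 K12).mulVecLin) ↔
      (WongW E11 A11 (0 : Matrix (Fin m1) (Fin 1) ℝ) C11 n ⊓
          Submodule.comap A11.mulVecLin (LinearMap.range E11.mulVecLin) ≤
        LinearMap.ker K11.mulVecLin) := by
  constructor
  · intro hle x1 hx1
    rw [Submodule.mem_inf, ← WE_inf_ker, Submodule.mem_inf] at hx1
    obtain ⟨⟨hWE, hkerC⟩, hcomap⟩ := hx1
    rw [Submodule.mem_comap, LinearMap.mem_range] at hcomap
    obtain ⟨u, hu⟩ := hcomap
    rw [mulVecLin_apply, mulVecLin_apply] at hu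
    have hkerC' : C11 *ᵥ x1 = 0 := by rwa [LinearMap.mem_ker, mulVecLin_apply] at hkerC
    have hmem : Sum.elim x1 0 ∈ U (Ebar (p := p) E11 E12) (Abar A11 A12 A22 C11 C12) n ⊓
        Submodule.comap (Abar A11 A12 A22 C11 C12).mulVecLin
          (LinearMap.range (Ebar (p := p) E11 E12).mulVecLin) := by
      rw [Submodule.mem_inf]
      constructor
      · rw [mem_U_bar]
        exact ⟨rfl, by simpa using hWE⟩
      · rw [Submodule.mem_comap, LinearMap.mem_range]
        refine ⟨Sum.elim u 0, ?_⟩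
        rw [mulVecLin_apply, mulVecLin_apply, Ebar_mulVec, Abar_mulVec]
        simp only [Sum.elim_comp_inl, Sum.elim_comp_inr, Matrix.mulVec_zero, add_zero, hu, hkerC']
    have := hle hmem
    rw [LinearMap.mem_ker, mulVecLin_apply, fromColumns_mulVec'] at this
    simp only [Sum.elim_comp_inl, Sum.elim_comp_inr, Matrix.mulVec_zero, add_zero] at this
    rw [LinearMap.mem_ker, mulVecLin_apply]
    exact this
  · intro hle x hx
    rw [Submodule.mem_inf] at hx
    obtain ⟨hU, hcomap⟩ := hx
    rw [mem_U_bar] at hU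
    obtain ⟨hx2, hx1WE⟩ := hU
    rw [Submodule.mem_comap, LinearMap.mem_range] at hcomap
    obtain ⟨u, hu⟩ := hcomap
    rw [mulVecLin_apply, mulVecLin_apply, Ebar_mulVec, Abar_mulVec, sum_elim_eq_iff] at hu
    obtain ⟨hu1, hu3⟩ := hu
    rw [sum_elim_eq_iff] at hu1
    obtain ⟨hua, hub⟩ := hu1
    rw [hx2] at hua hub hu3
    rw [Matrix.mulVec_zero] at hua hub hu3
    rw [add_zero] at hua hu3
    rw [hub, Matrix.mulVec_zero, add_zero] at hua
    have hx1mem : x ∘ Sum.inl ∈ WongW E11 A11 (0 : Matrix (Fin m1) (Fin 1) ℝ) C11 n ⊓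
        Submodule.comap A11.mulVecLin (LinearMap.range E11.mulVecLin) := by
      rw [Submodule.mem_inf, ← WE_inf_ker, Submodule.mem_inf]
      refine ⟨⟨hx1WE, ?_⟩, ?_⟩
      · rw [LinearMap.mem_ker, mulVecLin_apply]
        exact hu3.symm
      · rw [Submodule.mem_comap, LinearMap.mem_range]
        exact ⟨u ∘ Sum.inl, by rw [mulVecLin_apply, mulVecLin_apply, hua]⟩
    have := hle hx1mem
    rw [LinearMap.mem_ker, mulVecLin_apply] at this
    rw [LinearMap.mem_ker, mulVecLin_apply, fromColumns_mulVec', hx2, Matrix.mulVec_zero,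
      add_zero, this]

end Stmt17Aux

/-- With the Kalman decomposition notation, `rank F_{n+1,[Ē,Ā]} = rank F_{n+1,[Ē,Ā,K]}`
iff `W*_{[E11,A11,0,C11]} ∩ A11⁻¹(im E11) ⊆ ker K11`. -/
theorem stmt_17 {m1 n1 m2 p r : ℕ}
    (E11 A11 : Matrix (Fin m1) (Fin n1) ℝ)
    (E12 A12 : Matrix (Fin m1) (Fin m2) ℝ)
    (A22 : Matrix (Fin m2) (Fin m2) ℝ)
    (C11 : Matrix (Fin p) (Fin n1) ℝ) (C12 : Matrix (Fin p) (Fin m2) ℝ)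
    (K11 : Matrix (Fin r) (Fin n1) ℝ) (K12 : Matrix (Fin r) (Fin m2) ℝ)
    (n : ℕ) (hn : n = n1 + m2) (hn1 : 1 ≤ n) :
    (Fmat (n + 1)
        (Matrix.fromRows (Matrix.fromBlocks E11 E12 0 (1 : Matrix (Fin m2) (Fin m2) ℝ))
          (0 : Matrix (Fin p) (Fin n1 ⊕ Fin m2) ℝ))
        (Matrix.fromRows (Matrix.fromBlocks A11 A12 0 A22)
          (Matrix.fromCols C11 C12))).rank =
      (FmatK (n + 1)
        (Matrix.fromRows (Matrix.fromBlocks E11 E12 0 (1 : Matrix (Fin m2) (Fin m2) ℝ))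
          (0 : Matrix (Fin p) (Fin n1 ⊕ Fin m2) ℝ))
        (Matrix.fromRows (Matrix.fromBlocks A11 A12 0 A22)
          (Matrix.fromCols C11 C12))
        (Matrix.fromCols K11 K12)).rank ↔
    (⨆ i, WongW E11 A11 (0 : Matrix (Fin m1) (Fin 1) ℝ) C11 i) ⊓
        Submodule.comap A11.mulVecLin (LinearMap.range E11.mulVecLin) ≤
      LinearMap.ker K11.mulVecLin := by
  rw [show (Matrix.fromRows (Matrix.fromBlocks E11 E12 0 (1 : Matrix (Fin m2) (Fin m2) ℝ))
      (0 : Matrix (Fin p) (Fin n1 ⊕ Fin m2) ℝ)) = Stmt17Aux.Ebar (p := p) E11 E12 from rfl,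
    show (Matrix.fromRows (Matrix.fromBlocks A11 A12 0 A22) (Matrix.fromCols C11 C12)) =
      Stmt17Aux.Abar A11 A12 A22 C11 C12 from rfl]
  have hFK : FmatK (n + 1) (Stmt17Aux.Ebar (p := p) E11 E12)
      (Stmt17Aux.Abar A11 A12 A22 C11 C12) (Matrix.fromCols K11 K12) =
      fromRows (Fmat (n + 1) (Stmt17Aux.Ebar (p := p) E11 E12)
        (Stmt17Aux.Abar A11 A12 A22 C11 C12))
        (Stmt17Aux.Gmat (n + 1) (Matrix.fromCols K11 K12)) := by
    ext q c
    cases q <;> rfl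
  rw [hFK, Stmt17Aux.rank_fromRows_eq_iff,
    Stmt17Aux.ker_iff_main (by omega) _ _ (Matrix.fromCols K11 K12),
    show n + 1 - 1 = n from rfl,
    Stmt17Aux.final_iff E11 A11 E12 A12 A22 C11 C12 K11 K12 n]
  have hsup : WongW E11 A11 (0 : Matrix (Fin m1) (Fin 1) ℝ) C11 n =
      ⨆ i, WongW E11 A11 (0 : Matrix (Fin m1) (Fin 1) ℝ) C11 i := by
    apply Stmt17Aux.stab_sup
      (f := fun S => Submodule.comap E11.mulVecLin (Submodule.map A11.mulVecLin S ⊔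
        LinearMap.range (0 : Matrix (Fin m1) (Fin 1) ℝ).mulVecLin) ⊓
        LinearMap.ker C11.mulVecLin)
    · intro S T h
      exact inf_le_inf_right _
        (Submodule.comap_mono (sup_le_sup_right (Submodule.map_mono h) _))
    · rfl
    · intro i; rfl
    · rw [Module.finrank_fin_fun]
      omega
  rw [hsup]
end
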